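/- In Y_R(so_3), one has e_{-1,1}(u) = [e^{(1)}_{-1,0}, e_{-1,0}(u)] - e_{-1,0}(u)², where e^{(1)}_{-1,0} is the coefficient of u^{-1} in e_{-1,0}(u). -/

import Mathlib

noncomputable section

/-- Two-variable formal series ring: Laurent-type series in `u⁻¹` (outer) over
Laurent-type series in `v⁻¹` (inner) with coefficients in `A`.  In this ring both
variables `u`, `v` and differences such as `u - v`, `u - v - 1/2` make sense. -/
abbrev KK (A : Type) [Ring A] : Type := HahnSeries ℤ (HahnSeries ℤ A)

variable {A : Type} [Ring A]

/-- embed a series `a(u) = ∑_{n≥0} a_n u^{-n}` (u = outer variable) -/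
def su (a : ℕ → A) : KK A :=
  HahnSeries.ofPowerSeries ℤ (HahnSeries ℤ A) (PowerSeries.mk (fun n => HahnSeries.C (a n)))

/-- embed a series `a(v) = ∑_{n≥0} a_n v^{-n}` (v = inner variable) -/
def sv (a : ℕ → A) : KK A :=
  HahnSeries.C (HahnSeries.ofPowerSeries ℤ A (PowerSeries.mk a))

/-- the variable `u` -/
def Uu : KK A := HahnSeries.single (-1 : ℤ) 1
/-- the variable `v` -/
def Vv : KK A := HahnSeries.C (HahnSeries.single (-1 : ℤ) 1)

/-- constants -/
def cA (a : A) : KK A := HahnSeries.C (HahnSeries.C a)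

/-- coefficients of the shifted series `a(u+c)`, using
`(u+c)^{-r} = ∑_{j≥0} (-1)^j C(r-1+j,j) c^j u^{-r-j}`. -/
def shPow [Algebra ℚ A] (c : ℚ) (a : ℕ → A) : ℕ → A :=
  fun m => ∑ r ∈ Finset.range (m + 1),
    (algebraMap ℚ A ((-c) ^ (m - r) * ((m - 1).choose (m - r) : ℚ))) * a r

/-- the central scalar 1/2 = κ -/
def half [Algebra ℚ A] : KK A := cA (algebraMap ℚ A (1/2))

/-- Kronecker delta in `KK A` -/
def kd {ι : Type} [DecidableEq ι] (i j : ι) : KK A := if i = j then 1 else 0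

variable (A) in
/-- The RTT Yangian `Y_R(so₃)`: the indices `-1, 0, 1` are encoded as `0, 1, 2 : Fin 3`,
so that the index `-i` corresponds to `Fin.rev`.  The data consists of the matrix
generator coefficients `t i j r` (with `t_{ij}(u) = ∑_r t_{ij}^{(r)} u^{-r}`,
`t_{ij}^{(0)} = δ_{ij}`) subject to the entrywise RTT relation (with denominators
`u-v`, `u-v-1/2` cleared) and the unitarity relation `T(u)Tᵗ(u+1/2) = Tᵗ(u+1/2)T(u) = 1`,
together with the Gauss generators `e`, `f`, `k` (and the inverses of the `k`'s)
defined by the unique Gauss decomposition `T(u) = F(u)K(u)E(u)`. -/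
structure YRso3 (A : Type) [Ring A] [Algebra ℚ A] where
  t : Fin 3 → Fin 3 → ℕ → A
  t_zero : ∀ i j, t i j 0 = if i = j then 1 else 0
  /-- `(u-v)(u-v-1/2)[t_{ij}(u),t_{kl}(v)] = (u-v-1/2)(t_{kj}(u)t_{il}(v)-t_{kj}(v)t_{il}(u))
      - (u-v)(δ_{k,-i} ∑_p t_{pj}(u)t_{-p,l}(v) - δ_{l,-j} ∑_p t_{k,-p}(v)t_{ip}(u))` -/
  rtt : ∀ i j k l : Fin 3,
    (Uu - Vv) * (Uu - Vv - half) * (su (t i j) * sv (t k l) - sv (t k l) * su (t i j)) =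
      (Uu - Vv - half) * (su (t k j) * sv (t i l) - sv (t k j) * su (t i l)) -
      (Uu - Vv) * (kd k i.rev * ∑ p : Fin 3, su (t p j) * sv (t p.rev l) -
                   kd l j.rev * ∑ p : Fin 3, sv (t k p.rev) * su (t i p))
  /-- `T(u)Tᵗ(u+1/2) = 1` -/
  unitary₁ : ∀ i j : Fin 3,
    ∑ p : Fin 3, su (t i p) * su (shPow (1/2) (t j.rev p.rev)) = kd i j
  /-- `Tᵗ(u+1/2)T(u) = 1` -/
  unitary₂ : ∀ i j : Fin 3,
    ∑ p : Fin 3, su (shPow (1/2) (t p.rev i.rev)) * su (t p j) = kd i j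
  -- Gauss generators: e₋₁,₀ e₀₁ e₋₁,₁ f₀,₋₁ f₁₀ f₁,₋₁ k₋₁ k₀ k₁ and the inverses k⁻¹
  e10 : ℕ → A
  e01 : ℕ → A
  e11 : ℕ → A
  f01 : ℕ → A
  f10 : ℕ → A
  f11 : ℕ → A
  km1 : ℕ → A
  k0 : ℕ → A
  k1 : ℕ → A
  km1' : ℕ → A
  k0' : ℕ → A
  k1' : ℕ → A
  e10_zero : e10 0 = 0
  e01_zero : e01 0 = 0
  e11_zero : e11 0 = 0
  f01_zero : f01 0 = 0
  f10_zero : f10 0 = 0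
  f11_zero : f11 0 = 0
  km1_zero : km1 0 = 1
  k0_zero : k0 0 = 1
  k1_zero : k1 0 = 1
  -- the Gauss decomposition T(u) = F(u)K(u)E(u), entrywise
  g11 : su (t 0 0) = su km1
  g12 : su (t 0 1) = su km1 * su e10
  g13 : su (t 0 2) = su km1 * su e11
  g21 : su (t 1 0) = su f01 * su km1
  g22 : su (t 1 1) = su k0 + su f01 * su km1 * su e10
  g23 : su (t 1 2) = su k0 * su e01 + su f01 * su km1 * su e11
  g31 : su (t 2 0) = su f11 * su km1
  g32 : su (t 2 1) = su f10 * su k0 + su f11 * su km1 * su e10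
  g33 : su (t 2 2) = su k1 + su f10 * su k0 * su e01 + su f11 * su km1 * su e11
  -- the inverses of the diagonal Gauss generators
  km1_inv₁ : su km1 * su km1' = 1
  km1_inv₂ : su km1' * su km1 = 1
  k0_inv₁ : su k0 * su k0' = 1
  k0_inv₂ : su k0' * su k0 = 1
  k1_inv₁ : su k1 * su k1' = 1
  k1_inv₂ : su k1' * su k1 = 1


/-! ### Auxiliary lemmas -/

section Aux

variable {A : Type} [Ring A]

lemma ofPS_coeff_nat {R : Type} [Semiring R] (x : PowerSeries R) (n : ℕ) :
    (HahnSeries.ofPowerSeries ℤ R x).coeff (n : ℤ) = PowerSeries.coeff n x :=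
  HahnSeries.ofPowerSeries_apply_coeff x n

lemma ofPS_coeff_neg {R : Type} [Semiring R] (x : PowerSeries R) {n : ℤ} (h : n < 0) :
    (HahnSeries.ofPowerSeries ℤ R x).coeff n = 0 := by
  rw [HahnSeries.ofPowerSeries_apply]
  apply HahnSeries.embDomain_notin_image_support
  rintro ⟨m, -, hm⟩
  replace hm : (m : ℤ) = n := hm
  omega

/-- abbreviation for the one-variable series -/
def TT (a : ℕ → A) : HahnSeries ℤ A := HahnSeries.ofPowerSeries ℤ A (PowerSeries.mk a)

lemma TT_coeff (a : ℕ → A) (n : ℕ) : (TT a).coeff (n : ℤ) = a n := by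
  rw [TT, ofPS_coeff_nat, PowerSeries.coeff_mk]

lemma TT_coeff0 (a : ℕ → A) : (TT a).coeff (0 : ℤ) = a 0 := by
  have := TT_coeff a 0; rwa [Nat.cast_zero] at this

lemma TT_coeff1 (a : ℕ → A) : (TT a).coeff (1 : ℤ) = a 1 := by
  have := TT_coeff a 1; rwa [Nat.cast_one] at this

lemma sv_eq (a : ℕ → A) : sv a = HahnSeries.C (TT a) := rfl

lemma su_coeff_eq (a : ℕ → A) (n : ℤ) :
    (su a).coeff n = HahnSeries.C ((TT a).coeff n) := by
  rcases le_or_gt 0 n with h | h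
  · lift n to ℕ using h
    rw [su, ofPS_coeff_nat, PowerSeries.coeff_mk, TT_coeff]
  · rw [su, ofPS_coeff_neg _ h, TT, ofPS_coeff_neg _ h, map_zero]

lemma su_coeff_one (a : ℕ → A) : (su a).coeff (1 : ℤ) = HahnSeries.C (a 1) := by
  rw [su_coeff_eq, TT_coeff1]

lemma mul_C_coeff (x : KK A) (s : HahnSeries ℤ A) (n : ℤ) :
    (x * HahnSeries.C s).coeff n = x.coeff n * s := by
  rw [HahnSeries.C_apply, HahnSeries.coeff_mul_single_zero]

lemma C_mul_coeff (x : KK A) (s : HahnSeries ℤ A) (n : ℤ) :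
    (HahnSeries.C s * x).coeff n = s * x.coeff n := by
  rw [HahnSeries.C_apply, HahnSeries.coeff_single_zero_mul]

lemma mul_C_coeff' (x : HahnSeries ℤ A) (s : A) (n : ℤ) :
    (x * HahnSeries.C s).coeff n = x.coeff n * s := by
  rw [HahnSeries.C_apply, HahnSeries.coeff_mul_single_zero]

lemma C_mul_coeff' (x : HahnSeries ℤ A) (s : A) (n : ℤ) :
    (HahnSeries.C s * x).coeff n = s * x.coeff n := by
  rw [HahnSeries.C_apply, HahnSeries.coeff_single_zero_mul]

lemma singleNegOne_mul_coeff {R : Type} [Ring R] (x : HahnSeries ℤ R) (n : ℤ) :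
    (HahnSeries.single (-1 : ℤ) (1 : R) * x).coeff n = x.coeff (n + 1) := by
  have h := HahnSeries.coeff_single_mul_add (r := (1 : R)) (x := x) (a := n + 1) (b := (-1 : ℤ))
  simpa using h

lemma Uu_mul_coeff (x : KK A) (n : ℤ) : (Uu * x).coeff n = x.coeff (n + 1) :=
  singleNegOne_mul_coeff x n

lemma kk_add_coeff (x y : KK A) (n : ℤ) : (x + y).coeff n = x.coeff n + y.coeff n :=
  HahnSeries.coeff_add

lemma kk_sub_coeff (x y : KK A) (n : ℤ) : (x - y).coeff n = x.coeff n - y.coeff n :=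
  HahnSeries.coeff_sub

lemma hs_sub_coeff (x y : HahnSeries ℤ A) (n : ℤ) : (x - y).coeff n = x.coeff n - y.coeff n :=
  HahnSeries.coeff_sub

lemma hs_C_sub (a b : A) :
    (HahnSeries.C (a - b) : HahnSeries ℤ A) = HahnSeries.C a - HahnSeries.C b :=
  map_sub _ _ _

lemma hs_C_add (x y : A) :
    (HahnSeries.C x : HahnSeries ℤ A) + HahnSeries.C y = HahnSeries.C (x + y) :=
  (map_add _ _ _).symm

lemma hs_C_mul (x y : A) :
    (HahnSeries.C x : HahnSeries ℤ A) * HahnSeries.C y = HahnSeries.C (x * y) :=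
  (map_mul _ _ _).symm

lemma cA_zero : cA (0 : A) = 0 := by simp [cA]

lemma cA_one : cA (1 : A) = 1 := by simp [cA]

lemma cA_neg (a : A) : cA (-a) = -cA a := by
  rw [cA, cA, map_neg, map_neg]

/-- extraction of the coefficient of `v^{-k}` (inner exponent `k`), as a series in `u` -/
def psi (k : ℤ) (x : KK A) : KK A where
  coeff n := HahnSeries.C ((x.coeff n).coeff k)
  isPWO_support' := x.isPWO_support'.mono (by
    intro n hn
    simp only [Function.mem_support, ne_eq] at hn ⊢
    intro h
    apply hn
    rw [h]
    simp)

lemma psi_coeff (k : ℤ) (x : KK A) (n : ℤ) :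
    (psi k x).coeff n = HahnSeries.C ((x.coeff n).coeff k) := rfl

lemma psi_sub (k : ℤ) (x y : KK A) : psi k (x - y) = psi k x - psi k y := by
  ext n m
  rw [psi_coeff, kk_sub_coeff x y n, hs_sub_coeff (x.coeff n) (y.coeff n) k,
    hs_C_sub, kk_sub_coeff (psi k x) (psi k y) n, psi_coeff, psi_coeff]

lemma psi_Uu (k : ℤ) (x : KK A) : psi k (Uu * x) = Uu * psi k x := by
  ext n
  rw [psi_coeff, Uu_mul_coeff, Uu_mul_coeff, psi_coeff]

lemma psi_Vv (k : ℤ) (x : KK A) : psi k (Vv * x) = psi (k + 1) x := by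
  ext n
  rw [psi_coeff, psi_coeff, Vv, C_mul_coeff, singleNegOne_mul_coeff]

lemma psi_su_C (a : ℕ → A) (s : HahnSeries ℤ A) (k : ℤ) :
    psi k (su a * HahnSeries.C s) = su a * cA (s.coeff k) := by
  ext n
  rw [psi_coeff, mul_C_coeff, su_coeff_eq, C_mul_coeff', cA, mul_C_coeff, su_coeff_eq,
    ← map_mul]

lemma psi_C_su (a : ℕ → A) (s : HahnSeries ℤ A) (k : ℤ) :
    psi k (HahnSeries.C s * su a) = cA (s.coeff k) * su a := by
  ext n
  rw [psi_coeff, C_mul_coeff, su_coeff_eq, mul_C_coeff', cA, C_mul_coeff, su_coeff_eq,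
    ← map_mul]

/-! polymorphic ring-algebra helpers (to avoid instance-path mismatches on `KK A`) -/

lemma cancel_helper {B : Type} [Ring B] (P D X Ygood S1 S2 : B)
    (h : D * P * X = P * Ygood - D * ((0 : B) * S1 - 0 * S2))
    (hcomm : D * P = P * D) : P * (D * X - Ygood) = 0 := by
  have h0 : D * ((0 : B) * S1 - 0 * S2) = 0 := by noncomm_ring
  rw [h0, sub_zero] at h
  have e2 : P * (D * X - Ygood) = P * D * X - P * Ygood := by noncomm_ring
  rw [e2, ← hcomm, h, sub_self]

lemma extract_helper {B : Type} [Ring B] (U X1 sp sq cb : B)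
    (H2 : U * (X1 * 0 - 0 * X1) - (X1 * cb - cb * X1) = sp * 0 - 1 * sq) :
    X1 * cb - cb * X1 = sq := by
  have e : X1 * cb - cb * X1 - sq =
      -((U * (X1 * (0 : B) - 0 * X1) - (X1 * cb - cb * X1)) - (sp * 0 - 1 * sq)) := by
    noncomm_ring
  have e2 : X1 * cb - cb * X1 - sq = 0 := by rw [e, H2, sub_self, neg_zero]
  exact sub_eq_zero.mp e2

lemma assemble_helper {B : Type} [Ring B] (km e10 e11 c : B)
    (E1 : km * e10 * -c - -c * (km * e10) = km * e11)
    (E2 : km * c - c * km = km * e10) :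
    km * e11 = km * ((c * e10 - e10 * c) - e10 * e10) := by
  have h3 : c * (km * e10) - (km * e10) * c = km * e11 := by rw [← E1]; noncomm_ring
  have hkc : km * c = c * km + km * e10 := by rw [← E2]; noncomm_ring
  calc km * e11 = c * (km * e10) - (km * e10) * c := h3.symm
    _ = (km * c - km * e10) * e10 - (km * e10) * c := by rw [hkc]; noncomm_ring
    _ = km * ((c * e10 - e10 * c) - e10 * e10) := by noncomm_ring

lemma final_helper {B : Type} [Ring B] (k k' e Z : B) (hinv : k' * k = 1)
    (hKey : k * e = k * Z) : e = Z := by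
  calc e = (k' * k) * e := by rw [hinv, one_mul]
    _ = k' * (k * e) := by rw [mul_assoc]
    _ = k' * (k * Z) := by rw [hKey]
    _ = (k' * k) * Z := by rw [mul_assoc]
    _ = Z := by rw [hinv, one_mul]

section AlgQ

variable [Algebra ℚ A]

lemma half_comm (x : KK A) : half * x = x * half := by
  ext n m
  rw [half, cA, C_mul_coeff, mul_C_coeff, C_mul_coeff', mul_C_coeff']
  exact Algebra.commutes (1 / 2 : ℚ) ((x.coeff n).coeff m)

lemma D_comm : (Uu - Vv) * (Uu - Vv - half : KK A) = (Uu - Vv - half) * (Uu - Vv) := by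
  have h1 : (Uu - Vv) * (Uu - Vv - half : KK A) =
      (Uu - Vv) * (Uu - Vv) - (Uu - Vv) * half := mul_sub (α := KK A) (Uu - Vv) (Uu - Vv) half
  have h2 : (Uu - Vv - half : KK A) * (Uu - Vv) =
      (Uu - Vv) * (Uu - Vv) - half * (Uu - Vv) := sub_mul (α := KK A) (Uu - Vv) half (Uu - Vv)
  rw [h1, h2, half_comm (Uu - Vv)]

/-- regularity of elements of the form `u - C q` -/
lemma reg (q : HahnSeries ℤ A) {Z : KK A}
    (h : (Uu - HahnSeries.C q) * Z = 0) : Z = 0 := by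
  have e : Uu * Z - HahnSeries.C q * Z = (Uu - HahnSeries.C q) * Z := (sub_mul (α := KK A) Uu (HahnSeries.C q) Z).symm
  have e2 : Uu * Z - HahnSeries.C q * Z = 0 := by rw [e, h]
  have h' : Uu * Z = HahnSeries.C q * Z := sub_eq_zero.mp e2
  have hcoeff : ∀ n : ℤ, Z.coeff (n + 1) = q * Z.coeff n := by
    intro n
    have h2 : (Uu * Z).coeff n = (HahnSeries.C q * Z).coeff n := by rw [h']
    rwa [Uu_mul_coeff, C_mul_coeff] at h2
  by_contra hZ
  apply HahnSeries.coeff_order_eq_zero.not.2 hZ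
  have h3 := hcoeff (Z.order - 1)
  rw [sub_add_cancel] at h3
  rw [h3, HahnSeries.coeff_eq_zero_of_lt_order (by omega), mul_zero]

lemma P_eq : (Uu - Vv - half : KK A) =
    Uu - HahnSeries.C (HahnSeries.single (-1 : ℤ) (1 : A) +
      HahnSeries.C (algebraMap ℚ A (1 / 2))) := by
  have e : (Vv : KK A) + half = HahnSeries.C (HahnSeries.single (-1 : ℤ) (1 : A) +
      HahnSeries.C (algebraMap ℚ A (1 / 2))) := by
    rw [Vv, half, cA]
    exact (map_add HahnSeries.C _ _).symm
  have e2 : (Uu - Vv - half : KK A) = Uu - (Vv + half) := sub_sub (α := KK A) Uu Vv half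
  rw [e2, e]

/-- the main coefficient-extraction lemma: from
`(u-v)(a(u)b(v) - b(v)a(u)) = p(u)q(v) - p(v)q(u)` with `b₀ = 0`, `p₀ = 1`, `q₀ = 0`,
deduce `[a(u), b₁] = q(u)`. -/
lemma psi_extract (a b p q : ℕ → A) (hb0 : b 0 = 0) (hp0 : p 0 = 1) (hq0 : q 0 = 0)
    (H : (Uu - Vv) * (su a * sv b - sv b * su a) = su p * sv q - sv p * su q) :
    su a * cA (b 1) - cA (b 1) * su a = su q := by
  have e0 : Uu * (su a * sv b - sv b * su a) - Vv * (su a * sv b - sv b * su a) =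
      (Uu - Vv) * (su a * sv b - sv b * su a) :=
    (sub_mul (α := KK A) Uu Vv (su a * sv b - sv b * su a)).symm
  have H' := e0.trans H
  have H2 := congrArg (psi 0) H'
  rw [psi_sub 0 (Uu * (su a * sv b - sv b * su a)) (Vv * (su a * sv b - sv b * su a)),
    psi_Uu, psi_Vv, show ((0 : ℤ) + 1) = 1 by norm_num,
    psi_sub 0 (su a * sv b) (sv b * su a),
    psi_sub 1 (su a * sv b) (sv b * su a),
    psi_sub 0 (su p * sv q) (sv p * su q),
    sv_eq b, sv_eq q, sv_eq p,
    psi_su_C a (TT b) 0, psi_C_su a (TT b) 0,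
    psi_su_C a (TT b) 1, psi_C_su a (TT b) 1,
    psi_su_C p (TT q) 0, psi_C_su q (TT p) 0,
    TT_coeff0, TT_coeff1, TT_coeff0, TT_coeff0,
    hb0, hp0, hq0, cA_zero, cA_one] at H2
  exact extract_helper Uu (su a) (su p) (su q) (cA (b 1)) H2

end AlgQ

lemma su_mul_su_coeff_one (a b : ℕ → A) :
    (su a * su b).coeff (1 : ℤ) = HahnSeries.C (a 0 * b 1 + a 1 * b 0) := by
  have hmul : su a * su b = HahnSeries.ofPowerSeries ℤ (HahnSeries ℤ A)
      (PowerSeries.mk (fun n => HahnSeries.C (a n)) *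
       PowerSeries.mk (fun n => HahnSeries.C (b n))) :=
    (map_mul (HahnSeries.ofPowerSeries ℤ (HahnSeries ℤ A))
      (PowerSeries.mk (fun n => HahnSeries.C (a n)))
      (PowerSeries.mk (fun n => HahnSeries.C (b n)))).symm
  have hcast : (1 : ℤ) = ((1 : ℕ) : ℤ) := by norm_num
  rw [hmul, hcast, ofPS_coeff_nat, PowerSeries.coeff_mul,
    Finset.Nat.sum_antidiagonal_eq_sum_range_succ_mk]
  rw [Finset.sum_range_succ, Finset.sum_range_one]
  simp only [PowerSeries.coeff_mk]
  norm_num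

end Aux

/-! ### The main theorem -/

/-- `e₋₁,₁(u) = [e⁽¹⁾₋₁,₀, e₋₁,₀(u)] - e₋₁,₀(u)²`, where `e⁽¹⁾₋₁,₀`
is the coefficient of `u⁻¹` in `e₋₁,₀(u)`. -/
theorem stmt13 (A : Type) [Ring A] [Algebra ℚ A] (Y : YRso3 A) :
    su Y.e11 = (cA (Y.e10 1) * su Y.e10 - su Y.e10 * cA (Y.e10 1)) - su Y.e10 * su Y.e10 := by
  -- values of shPow in low degrees
  have shPow0 : ∀ a : ℕ → A, shPow (1/2) a 0 = a 0 := by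
    intro a; simp [shPow]
  have shPow1 : ∀ a : ℕ → A, shPow (1/2) a 1 = a 1 := by
    intro a; simp [shPow, Finset.sum_range_succ]
  -- values of t at 0
  have z000 : Y.t 0 0 0 = 1 := by rw [Y.t_zero, if_pos rfl]
  have z110 : Y.t 1 1 0 = 1 := by rw [Y.t_zero, if_pos rfl]
  have z010 : Y.t 0 1 0 = 0 := by rw [Y.t_zero, if_neg (by decide)]
  have z020 : Y.t 0 2 0 = 0 := by rw [Y.t_zero, if_neg (by decide)]
  have z100 : Y.t 1 0 0 = 0 := by rw [Y.t_zero, if_neg (by decide)]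
  have z120 : Y.t 1 2 0 = 0 := by rw [Y.t_zero, if_neg (by decide)]
  -- Step A : t 1 2 1 = -(t 0 1 1), from unitarity
  have hA : Y.t 1 2 1 = -(Y.t 0 1 1) := by
    have hsum := (Fin.sum_univ_three
      (f := fun p : Fin 3 => su (Y.t 0 p) * su (shPow (1/2) (Y.t (Fin.rev 1) (Fin.rev p))))).symm
    have hu := hsum.trans (Y.unitary₁ 0 1)
    have hkd : (kd (0 : Fin 3) 1 : KK A) = 0 := by rw [kd, if_neg (by decide)]
    rw [hkd] at hu
    have hu2 : ((su (Y.t 0 0) * su (shPow (1/2) (Y.t (Fin.rev 1) (Fin.rev 0))) +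
        su (Y.t 0 1) * su (shPow (1/2) (Y.t (Fin.rev 1) (Fin.rev 1))) +
        su (Y.t 0 2) * su (shPow (1/2) (Y.t (Fin.rev 1) (Fin.rev 2)))) : KK A).coeff (1 : ℤ)
        = 0 := by rw [hu]; rfl
    rw [kk_add_coeff, kk_add_coeff, su_mul_su_coeff_one, su_mul_su_coeff_one,
      su_mul_su_coeff_one, hs_C_add, hs_C_add] at hu2
    have hu3 := HahnSeries.C_injective (hu2.trans (HahnSeries.C_zero (R := A)).symm)
    have r0 : Fin.rev (0 : Fin 3) = 2 := by decide
    have r1 : Fin.rev (1 : Fin 3) = 1 := by decide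
    have r2 : Fin.rev (2 : Fin 3) = 0 := by decide
    rw [r0, r1, r2, shPow0, shPow0, shPow0, shPow1, shPow1, shPow1] at hu3
    rw [z000, z010, z020, z110, z100, z120] at hu3
    simp only [one_mul, mul_one, mul_zero, zero_mul, add_zero, zero_add] at hu3
    exact eq_neg_of_add_eq_zero_left hu3
  -- Step B : t 0 1 1 = e10 1, from the Gauss decomposition
  have hB : Y.t 0 1 1 = Y.e10 1 := by
    have hg : (su (Y.t 0 1)).coeff (1 : ℤ) = (su Y.km1 * su Y.e10).coeff (1 : ℤ) := by
      rw [Y.g12]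
    rw [su_coeff_one, su_mul_su_coeff_one] at hg
    have h2 := HahnSeries.C_injective hg
    rw [Y.km1_zero, Y.e10_zero, one_mul, mul_zero, add_zero] at h2
    exact h2
  -- Step C : derive the two commutator identities from the RTT relation
  have main : ∀ i j k l : Fin 3, (kd (k : Fin 3) (i.rev) : KK A) = 0 →
      (kd (l : Fin 3) (j.rev) : KK A) = 0 →
      (Uu - Vv) * (su (Y.t i j) * sv (Y.t k l) - sv (Y.t k l) * su (Y.t i j)) =
        su (Y.t k j) * sv (Y.t i l) - sv (Y.t k j) * su (Y.t i l) := by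
    intro i j k l hk1 hk2
    have hr := Y.rtt i j k l
    rw [hk1, hk2] at hr
    have hPZ := cancel_helper (Uu - Vv - half) (Uu - Vv)
      (su (Y.t i j) * sv (Y.t k l) - sv (Y.t k l) * su (Y.t i j))
      (su (Y.t k j) * sv (Y.t i l) - sv (Y.t k j) * su (Y.t i l))
      (∑ p : Fin 3, su (Y.t p j) * sv (Y.t p.rev l))
      (∑ p : Fin 3, sv (Y.t k p.rev) * su (Y.t i p)) hr D_comm
    rw [P_eq] at hPZ
    exact sub_eq_zero.mp (reg _ hPZ)
  -- the two identities
  have E1 : su (Y.t 0 1) * cA (Y.t 1 2 1) - cA (Y.t 1 2 1) * su (Y.t 0 1) = su (Y.t 0 2) :=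
    psi_extract _ _ _ _ z120 z110 z020
      (main 0 1 1 2 (by rw [kd, if_neg (by decide)]) (by rw [kd, if_neg (by decide)]))
  have E2 : su (Y.t 0 0) * cA (Y.t 0 1 1) - cA (Y.t 0 1 1) * su (Y.t 0 0) = su (Y.t 0 1) :=
    psi_extract _ _ _ _ z010 z000 z010
      (main 0 0 0 1 (by rw [kd, if_neg (by decide)]) (by rw [kd, if_neg (by decide)]))
  -- rewrite via the Gauss decomposition
  rw [hA, hB, cA_neg, Y.g12, Y.g13] at E1
  rw [hB, Y.g11, Y.g12] at E2
  have hKey := assemble_helper (su Y.km1) (su Y.e10) (su Y.e11) (cA (Y.e10 1)) E1 E2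
  exact final_helper (su Y.km1) (su Y.km1') (su Y.e11) _ Y.km1_inv₂ hKey
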